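/- Let τ_1 and τ_2 be independent random variables on a probability space with τ_i exponentially distributed with rate λ_i > 0 (i.e., P(τ_i > t) = e^{−λ_i t} for t ≥ 0), and let s_1, s_2 > 0. In the survivor-takes-all tontine, peer i's lifetime payout is (s_1 + s_2) · 1_{τ_i > τ_j} for {i, j} = {1, 2}. Then E[(s_1 + s_2) · 1_{τ_1 > τ_2}] = s_1 if and only if λ_1 s_1 = λ_2 s_2, and in that case also E[(s_1 + s_2) · 1_{τ_2 > τ_1}] = s_2. -/

import Mathlib

open MeasureTheory
open scoped ProbabilityTheory

section AuxTontine

open Set Real ProbabilityTheory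
open scoped ENNReal

lemma aux_int_exp {b : ℝ} (hb : 0 < b) :
    ∫ x in Set.Ioi (0:ℝ), Real.exp (-(b*x)) = 1/b := by
  have h := integral_comp_mul_left_Ioi (fun x => Real.exp (-x)) 0 hb
  simp only [mul_zero, integral_exp_neg_Ioi, neg_zero, Real.exp_zero, smul_eq_mul, mul_one] at h
  rw [h]
  simp [one_div]

lemma aux_map_eq {Ω : Type*} [MeasureSpace Ω] [IsProbabilityMeasure (ℙ : Measure Ω)]
    {lam : ℝ} (hlam : 0 < lam) {τ : Ω → ℝ} (hm : Measurable τ)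
    (hlaw : ∀ t, 0 ≤ t → ℙ {ω | t < τ ω} = ENNReal.ofReal (Real.exp (-lam * t))) :
    (ℙ : Measure Ω).map τ = expMeasure lam := by
  refine MeasureTheory.Measure.ext_of_Iic _ _ fun a => ?_
  have hexp : expMeasure lam (Iic a)
      = ENNReal.ofReal (if 0 ≤ a then 1 - rexp (-(lam*a)) else 0) := by
    rw [expMeasure, gammaMeasure, withDensity_apply _ measurableSet_Iic]
    exact lintegral_exponentialPDF_eq_antiDeriv hlam a
  rw [Measure.map_apply hm measurableSet_Iic, hexp]
  have hms : MeasurableSet {ω | a < τ ω} := measurableSet_lt measurable_const hm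
  have hcompl : τ ⁻¹' Iic a = {ω | a < τ ω}ᶜ := by ext ω; simp [not_lt]
  by_cases h : 0 ≤ a
  · rw [if_pos h, hcompl, measure_compl hms (measure_ne_top _ _), hlaw a h, measure_univ]
    rw [ENNReal.ofReal_sub _ (Real.exp_nonneg _)]
    simp [neg_mul]
  · rw [if_neg h]
    push_neg at h
    have hsub : τ ⁻¹' Iic a ⊆ {ω | (0:ℝ) < τ ω}ᶜ := by
      intro ω hω
      simp only [mem_preimage, mem_Iic] at hω
      simp only [mem_compl_iff, mem_setOf_eq, not_lt]
      linarith
    have h0 : ℙ {ω | (0:ℝ) < τ ω}ᶜ = 0 := by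
      rw [measure_compl (measurableSet_lt measurable_const hm) (measure_ne_top _ _),
        hlaw 0 le_rfl]
      simp
    simpa using measure_mono_null hsub h0

set_option maxHeartbeats 1000000 in
lemma aux_prob_lt {Ω : Type*} [MeasureSpace Ω] [IsProbabilityMeasure (ℙ : Measure Ω)]
    {lam1 lam2 : ℝ} (hlam1 : 0 < lam1) (hlam2 : 0 < lam2)
    {τ1 τ2 : Ω → ℝ} (hm1 : Measurable τ1) (hm2 : Measurable τ2)
    (hindep : ProbabilityTheory.IndepFun τ1 τ2 ℙ)
    (hlaw1 : ∀ t, 0 ≤ t → ℙ {ω | t < τ1 ω} = ENNReal.ofReal (Real.exp (-lam1 * t)))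
    (hlaw2 : ∀ t, 0 ≤ t → ℙ {ω | t < τ2 ω} = ENNReal.ofReal (Real.exp (-lam2 * t))) :
    ℙ {ω | τ2 ω < τ1 ω} = ENNReal.ofReal (lam2 / (lam1 + lam2)) := by
  have h1 : (ℙ : Measure Ω).map τ1 = expMeasure lam1 := aux_map_eq hlam1 hm1 hlaw1
  have h2 : (ℙ : Measure Ω).map τ2 = expMeasure lam2 := aux_map_eq hlam2 hm2 hlaw2
  have hprod : (ℙ : Measure Ω).map (fun ω => (τ1 ω, τ2 ω))
      = ((ℙ : Measure Ω).map τ1).prod ((ℙ : Measure Ω).map τ2) :=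
    (ProbabilityTheory.indepFun_iff_map_prod_eq_prod_map_map hm1.aemeasurable
      hm2.aemeasurable).mp hindep
  have hS : MeasurableSet {p : ℝ × ℝ | p.2 < p.1} := measurableSet_lt measurable_snd measurable_fst
  have hsP : IsProbabilityMeasure (expMeasure lam2) := isProbabilityMeasure_expMeasure hlam2
  have hkey : ℙ {ω | τ2 ω < τ1 ω}
      = (expMeasure lam1).prod (expMeasure lam2) {p : ℝ × ℝ | p.2 < p.1} := by
    rw [← h1, ← h2, ← hprod, Measure.map_apply (hm1.prodMk hm2) hS]
    rfl
  have hIio : ∀ x : ℝ, expMeasure lam2 (Iio x)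
      = ENNReal.ofReal (if 0 ≤ x then 1 - rexp (-(lam2*x)) else 0) := by
    intro x
    rw [expMeasure, gammaMeasure, withDensity_apply _ measurableSet_Iio,
      setLIntegral_congr Iio_ae_eq_Iic]
    exact lintegral_exponentialPDF_eq_antiDeriv hlam2 x
  rw [hkey, Measure.prod_apply hS]
  have hpre : ∀ x : ℝ, (Prod.mk x ⁻¹' {p : ℝ × ℝ | p.2 < p.1}) = Iio x := by
    intro x; ext y; simp
  simp only [hpre, hIio]
  rw [expMeasure, gammaMeasure]
  have hfm : Measurable fun x : ℝ =>
      ENNReal.ofReal (if 0 ≤ x then 1 - rexp (-(lam2*x)) else 0) := by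
    apply Measurable.ennreal_ofReal
    apply Measurable.ite measurableSet_Ici
    · fun_prop
    · fun_prop
  have hpdfm : Measurable (gammaPDF 1 lam1) := (measurable_gammaPDFReal 1 lam1).ennreal_ofReal
  rw [lintegral_withDensity_eq_lintegral_mul _ hpdfm hfm]
  have heq : (fun x => (gammaPDF 1 lam1 x) * ENNReal.ofReal (if 0 ≤ x then 1 - rexp (-(lam2*x)) else 0))
      = Set.indicator (Ioi 0) (fun x =>
        ENNReal.ofReal (lam1 * rexp (-(lam1*x)) * (1 - rexp (-(lam2*x))))) := by
    funext x
    have hg : gammaPDF 1 lam1 x = exponentialPDF lam1 x := rfl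
    rcases lt_trichotomy x 0 with hx | hx | hx
    · rw [hg, exponentialPDF_of_neg hx, zero_mul,
        Set.indicator_of_notMem (by simpa using hx.le.not_gt)]
    · subst hx
      simp [hg, exponentialPDF_of_nonneg le_rfl]
    · rw [hg, exponentialPDF_of_nonneg hx.le, if_pos hx.le,
        ← ENNReal.ofReal_mul (by positivity), Set.indicator_of_mem (Set.mem_Ioi.mpr hx)]
  simp only [Pi.mul_apply]
  rw [lintegral_congr fun x => congrFun heq x, lintegral_indicator measurableSet_Ioi _]
  have hint1 : IntegrableOn (fun x => lam1 * rexp (-(lam1*x))) (Ioi (0:ℝ)) := by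
    have := (exp_neg_integrableOn_Ioi 0 hlam1).const_mul lam1
    simpa only [neg_mul, IntegrableOn] using this
  have hint2 : IntegrableOn (fun x => lam1 * rexp (-((lam1+lam2)*x))) (Ioi (0:ℝ)) := by
    have := (exp_neg_integrableOn_Ioi 0 (show (0:ℝ) < lam1 + lam2 by positivity)).const_mul lam1
    simpa only [neg_mul, IntegrableOn] using this
  have hfeq : ∀ x : ℝ, lam1 * rexp (-(lam1*x)) * (1 - rexp (-(lam2*x)))
      = lam1 * rexp (-(lam1*x)) - lam1 * rexp (-((lam1+lam2)*x)) := by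
    intro x
    have h : rexp (-((lam1+lam2)*x)) = rexp (-(lam1*x)) * rexp (-(lam2*x)) := by
      rw [← Real.exp_add]; ring_nf
    rw [h]; ring
  have hint : IntegrableOn (fun x => lam1 * rexp (-(lam1*x)) * (1 - rexp (-(lam2*x)))) (Ioi (0:ℝ)) := by
    apply (hint1.sub hint2).congr
    filter_upwards with x
    simp only [Pi.sub_apply]
    exact (hfeq x).symm
  rw [← ofReal_integral_eq_lintegral_ofReal hint]
  · congr 1
    have : ∫ x in Ioi (0:ℝ), lam1 * rexp (-(lam1*x)) * (1 - rexp (-(lam2*x)))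
        = ∫ x in Ioi (0:ℝ), (lam1 * rexp (-(lam1*x)) - lam1 * rexp (-((lam1+lam2)*x))) :=
      setIntegral_congr_fun measurableSet_Ioi (fun x _ => hfeq x)
    rw [this, integral_sub hint1 hint2, integral_const_mul, integral_const_mul,
      aux_int_exp hlam1, aux_int_exp (show (0:ℝ) < lam1 + lam2 by positivity)]
    field_simp
    ring
  · refine (ae_restrict_iff' measurableSet_Ioi).mpr (Filter.Eventually.of_forall fun x hx => ?_)
    have hx0 : (0:ℝ) < x := hx
    have h1 : 0 ≤ lam1 * rexp (-(lam1*x)) := by positivity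
    have h2 : rexp (-(lam2*x)) ≤ 1 := by
      rw [Real.exp_le_one_iff]
      nlinarith
    simp only [Pi.zero_apply]
    nlinarith

end AuxTontine

/-- Two-peer survivor-takes-all tontine with independent exponential lifetimes: the
expected lifetime payout `E[(s_1+s_2) 1_{τ_1>τ_2}]` equals `s_1` iff
`λ_1 s_1 = λ_2 s_2`, in which case peer 2 is also treated fairly. -/
theorem stmt_18 {Ω : Type*} [MeasureSpace Ω]
    [IsProbabilityMeasure (ℙ : Measure Ω)]
    (lam1 lam2 s1 s2 : ℝ) (hlam1 : 0 < lam1) (hlam2 : 0 < lam2)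
    (hs1 : 0 < s1) (hs2 : 0 < s2)
    (τ1 τ2 : Ω → ℝ) (hm1 : Measurable τ1) (hm2 : Measurable τ2)
    (hindep : ProbabilityTheory.IndepFun τ1 τ2 ℙ)
    (hlaw1 : ∀ t, 0 ≤ t → ℙ {ω | t < τ1 ω} = ENNReal.ofReal (Real.exp (-lam1 * t)))
    (hlaw2 : ∀ t, 0 ≤ t → ℙ {ω | t < τ2 ω} = ENNReal.ofReal (Real.exp (-lam2 * t))) :
    ((∫ ω, Set.indicator {ω' | τ2 ω' < τ1 ω'} (fun _ => s1 + s2) ω ∂ℙ) = s1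
      ↔ lam1 * s1 = lam2 * s2) ∧
    (lam1 * s1 = lam2 * s2 →
      (∫ ω, Set.indicator {ω' | τ1 ω' < τ2 ω'} (fun _ => s1 + s2) ω ∂ℙ) = s2) := by
  have hsum : (0:ℝ) < lam1 + lam2 := by positivity
  have hP12 : ℙ {ω | τ2 ω < τ1 ω} = ENNReal.ofReal (lam2 / (lam1 + lam2)) :=
    aux_prob_lt hlam1 hlam2 hm1 hm2 hindep hlaw1 hlaw2
  have hP21 : ℙ {ω | τ1 ω < τ2 ω} = ENNReal.ofReal (lam1 / (lam2 + lam1)) :=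
    aux_prob_lt hlam2 hlam1 hm2 hm1 hindep.symm hlaw2 hlaw1
  have hS1 : MeasurableSet {ω | τ2 ω < τ1 ω} := measurableSet_lt hm2 hm1
  have hS2 : MeasurableSet {ω | τ1 ω < τ2 ω} := measurableSet_lt hm1 hm2
  have hI1 : (∫ ω, Set.indicator {ω' | τ2 ω' < τ1 ω'} (fun _ => s1 + s2) ω ∂ℙ)
      = (lam2 / (lam1 + lam2)) * (s1 + s2) := by
    rw [MeasureTheory.integral_indicator_const _ hS1, measureReal_def, hP12,
      ENNReal.toReal_ofReal (by positivity), smul_eq_mul]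
  have hI2 : (∫ ω, Set.indicator {ω' | τ1 ω' < τ2 ω'} (fun _ => s1 + s2) ω ∂ℙ)
      = (lam1 / (lam2 + lam1)) * (s1 + s2) := by
    rw [MeasureTheory.integral_indicator_const _ hS2, measureReal_def, hP21,
      ENNReal.toReal_ofReal (by positivity), smul_eq_mul]
  rw [hI1, hI2]
  constructor
  · constructor
    · intro h
      field_simp at h
      nlinarith
    · intro h
      field_simp
      nlinarith
  · intro h
    field_simp
    nlinarith
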